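/- If x ∈ ℝ^m is an s-rectifiable random vector, then there exists a set U ⊆ ℝ^m with P[x ∈ U] = 1 and upper modified Minkowski dimension of U at most s. -/

import Mathlib

open MeasureTheory Filter Set Metric Bornology Matrix Pointwise
noncomputable def coveringNumber {E : Type*} [PseudoMetricSpace E] (U : Set E) (ρ : ℝ) : ℕ :=
  sInf {k : ℕ | ∃ t : Finset E, t.card = k ∧ U ⊆ ⋃ x ∈ t, Metric.ball x ρ}

noncomputable def lowerMinkDim {E : Type*} [PseudoMetricSpace E] (U : Set E) : ℝ :=
  liminf (fun ρ : ℝ => Real.log (coveringNumber U ρ) / Real.log (1 / ρ)) (nhdsWithin 0 (Set.Ioi 0))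

noncomputable def upperMinkDim {E : Type*} [PseudoMetricSpace E] (U : Set E) : ℝ :=
  limsup (fun ρ : ℝ => Real.log (coveringNumber U ρ) / Real.log (1 / ρ)) (nhdsWithin 0 (Set.Ioi 0))

def IsDimCover {E : Type*} [PseudoMetricSpace E] [MeasurableSpace E] (U : Set E) (V : ℕ → Set E) : Prop :=
  (∀ i, (V i).Nonempty ∧ IsBounded (V i) ∧ MeasurableSet (V i)) ∧ U ⊆ ⋃ i, V i

noncomputable def lowerModMinkDim {E : Type*} [PseudoMetricSpace E] [MeasurableSpace E] (U : Set E) : ℝ :=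
  sInf {d : ℝ | ∃ V : ℕ → Set E, IsDimCover U V ∧ d = ⨆ i, lowerMinkDim (V i)}

noncomputable def upperModMinkDim {E : Type*} [PseudoMetricSpace E] [MeasurableSpace E] (U : Set E) : ℝ :=
  sInf {d : ℝ | ∃ V : ℕ → Set E, IsDimCover U V ∧ d = ⨆ i, upperMinkDim (V i)}
def IsRectifiableSet (s m : ℕ) (U : Set (EuclideanSpace ℝ (Fin m))) : Prop :=
  MeasurableSet U ∧
  ∃ (A : ℕ → Set (EuclideanSpace ℝ (Fin s)))
    (φ : ℕ → EuclideanSpace ℝ (Fin s) → EuclideanSpace ℝ (Fin m)),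
    (∀ i, (A i).Nonempty ∧ IsBounded (A i) ∧ MeasurableSet (A i) ∧
      ∃ K : NNReal, LipschitzOnWith K (φ i) (A i)) ∧
    μH[(s : ℝ)] (U \ ⋃ i, φ i '' A i) = 0

def IsRectifiableRV (s m : ℕ) {Ω : Type*} [MeasureSpace Ω] (x : Ω → EuclideanSpace ℝ (Fin m)) : Prop :=
  Measurable x ∧ ∃ U : Set (EuclideanSpace ℝ (Fin m)), IsRectifiableSet s m U ∧
    volume (x ⁻¹' U) = 1 ∧ Measure.map x volume ≪ μH[(s : ℝ)]


lemma coveringNumber_le_card {E : Type*} [PseudoMetricSpace E] {U : Set E} {ρ : ℝ}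
    {t : Finset E} (h : U ⊆ ⋃ x ∈ t, Metric.ball x ρ) : coveringNumber U ρ ≤ t.card :=
  Nat.sInf_le ⟨t, rfl, h⟩

lemma ratio_nonneg {E : Type*} [PseudoMetricSpace E] (U : Set E) :
    ∀ᶠ ρ : ℝ in nhdsWithin 0 (Set.Ioi 0),
      0 ≤ Real.log (coveringNumber U ρ) / Real.log (1 / ρ) := by
  filter_upwards [Ioo_mem_nhdsGT (zero_lt_one (α := ℝ))] with ρ hρ
  have h1 : (1 : ℝ) ≤ 1 / ρ := (le_div_iff₀ hρ.1).2 (by linarith [hρ.2])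
  exact div_nonneg (Real.log_natCast_nonneg _) (Real.log_nonneg h1)

lemma upperMinkDim_nonneg {E : Type*} [PseudoMetricSpace E] (U : Set E) :
    0 ≤ upperMinkDim U := by
  rw [upperMinkDim, limsup_eq]
  refine Real.sInf_nonneg fun a ha => ?_
  simp only [Set.mem_setOf_eq] at ha
  obtain ⟨ρ, h1, h2⟩ := (ha.and (ratio_nonneg U)).exists
  exact h2.trans h1

lemma upperMinkDim_le_of_poly {E : Type*} [PseudoMetricSpace E] (S : Set E) (n : ℕ) (C : ℝ)
    (hC : 1 ≤ C) (h : ∀ ρ : ℝ, 0 < ρ → ρ ≤ 1 → (coveringNumber S ρ : ℝ) ≤ (C / ρ) ^ n) :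
    upperMinkDim S ≤ n := by
  have hC0 : (0:ℝ) < C := lt_of_lt_of_le one_pos hC
  have key : ∀ ε : ℝ, 0 < ε → ∀ᶠ ρ : ℝ in nhdsWithin 0 (Set.Ioi 0),
      Real.log (coveringNumber S ρ) / Real.log (1 / ρ) ≤ n + ε := by
    intro ε hε
    set B : ℝ := n * Real.log C with hB
    have hBnn : 0 ≤ B := mul_nonneg (Nat.cast_nonneg n) (Real.log_nonneg hC)
    have hr0 : (0:ℝ) < min (Real.exp (-(B / ε + 1))) 1 :=
      lt_min (Real.exp_pos _) one_pos
    filter_upwards [Ioo_mem_nhdsGT hr0] with ρ hρ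
    obtain ⟨hρ0, hρr⟩ := hρ
    have hρ1 : ρ < 1 := hρr.trans_le (min_le_right _ _)
    have hL : 0 < Real.log (1 / ρ) := Real.log_pos (by rw [one_div]; exact (one_lt_inv₀ hρ0).2 hρ1)
    set L : ℝ := Real.log (1 / ρ) with hLdef
    have hL2 : B / ε + 1 ≤ L := by
      have hρe : ρ < Real.exp (-(B / ε + 1)) := hρr.trans_le (min_le_left _ _)
      have := (Real.log_lt_iff_lt_exp hρ0).2 hρe
      have hlog : Real.log (1/ρ) = - Real.log ρ := by
        rw [one_div, Real.log_inv]
      rw [hLdef, hlog]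
      linarith
    have hBL : B ≤ ε * L := by
      have h1 : ε * (B / ε + 1) ≤ ε * L := mul_le_mul_of_nonneg_left hL2 hε.le
      have h2 : ε * (B / ε + 1) = B + ε := by field_simp
      linarith
    have hN : Real.log (coveringNumber S ρ) ≤ B + n * L := by
      have hb := h ρ hρ0 hρ1.le
      have hRHS : Real.log ((C / ρ) ^ n) = B + n * L := by
        rw [Real.log_pow, Real.log_div (ne_of_gt hC0) (ne_of_gt hρ0), hB, hLdef, one_div,
          Real.log_inv]
        ring
      rcases Nat.eq_zero_or_pos (coveringNumber S ρ) with h0 | h0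
      · rw [h0]
        simp only [Nat.cast_zero, Real.log_zero]
        have : (0:ℝ) ≤ n * L := mul_nonneg (Nat.cast_nonneg n) hL.le
        linarith
      · have hpos : (0:ℝ) < (coveringNumber S ρ : ℝ) := by exact_mod_cast h0
        calc Real.log (coveringNumber S ρ) ≤ Real.log ((C / ρ) ^ n) :=
              Real.log_le_log hpos hb
          _ = B + n * L := hRHS
    rw [div_le_iff₀ hL]
    have : (n + ε) * L = n * L + ε * L := by ring
    rw [this]
    linarith
  have hcb : IsCoboundedUnder (· ≤ ·) (nhdsWithin (0:ℝ) (Set.Ioi 0))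
      (fun ρ : ℝ => Real.log (coveringNumber S ρ) / Real.log (1 / ρ)) :=
    isCoboundedUnder_le_of_eventually_le _ (x := (0:ℝ)) (ratio_nonneg S)
  refine le_of_forall_gt_imp_ge_of_dense fun a ha => ?_
  have hε : (0:ℝ) < a - n := sub_pos.2 ha
  have hev := (key _ hε).mono (fun ρ hρ => by linarith [hρ] : ∀ ρ : ℝ,
    Real.log (coveringNumber S ρ) / Real.log (1 / ρ) ≤ (n:ℝ) + (a - n) →
    Real.log (coveringNumber S ρ) / Real.log (1 / ρ) ≤ a)
  exact limsup_le_of_le hcb hev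
/-- Grid covering of a ball in Euclidean space. -/
lemma grid_cover {s : ℕ} (R δ : ℝ) (hR : 0 < R) (hδ : 0 < δ) :
    ∃ t : Finset (EuclideanSpace ℝ (Fin s)),
      (t.card : ℝ) ≤ (2 * (R / δ) + 5) ^ s ∧
      {q : EuclideanSpace ℝ (Fin s) | ‖q‖ ≤ R} ⊆ ⋃ c ∈ t, Metric.ball c ((s + 1) * δ) := by
  classical
  set M : ℤ := ⌈R / δ⌉ with hM
  have hRδ : 0 < R / δ := by positivity
  have hM0 : 0 ≤ M := Int.ceil_nonneg hRδ.le
  have hMle : (M : ℝ) ≤ R / δ + 1 := (Int.ceil_lt_add_one _).le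
  have hMge : R / δ ≤ (M : ℝ) := Int.le_ceil _
  set t : Finset (EuclideanSpace ℝ (Fin s)) :=
    (Fintype.piFinset fun _ : Fin s => Finset.Icc (-(M + 1)) (M + 1)).image
      (fun k => (WithLp.toLp 2 (fun i => ((k i : ℝ) * δ)) : EuclideanSpace ℝ (Fin s))) with ht
  refine ⟨t, ?_, ?_⟩
  · calc (t.card : ℝ)
        ≤ ((Fintype.piFinset fun _ : Fin s => Finset.Icc (-(M + 1)) (M + 1)).card : ℝ) := by
          rw [ht]
          exact_mod_cast Finset.card_image_le
      _ = (((M + 1 + 1 - -(M + 1)).toNat : ℝ)) ^ s := by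
          rw [Fintype.card_piFinset]
          simp only [Int.card_Icc]
          rw [Finset.prod_const, Finset.card_univ, Fintype.card_fin]
          push_cast
          ring
      _ ≤ (2 * (R / δ) + 5) ^ s := by
          apply pow_le_pow_left₀ (by positivity)
          have hx : ((M + 1 + 1 - -(M + 1)).toNat : ℤ) = 2 * M + 3 := by
            rw [Int.toNat_of_nonneg (by linarith)]
            ring
          have hx' : (((M + 1 + 1 - -(M + 1)).toNat : ℝ)) = ((2 * M + 3 : ℤ) : ℝ) := by
            exact_mod_cast hx
          rw [hx']
          push_cast
          linarith
  · intro q hq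
    simp only [Set.mem_setOf_eq] at hq
    have hcoord : ∀ i, |q i| ≤ R := by
      intro i
      refine le_trans ?_ hq
      rw [EuclideanSpace.norm_eq]
      have h2 : |q i| = Real.sqrt (‖q i‖ ^ 2) := by
        rw [Real.norm_eq_abs, Real.sqrt_sq_eq_abs, abs_abs]
      rw [h2]
      apply Real.sqrt_le_sqrt
      exact Finset.single_le_sum (f := fun j => ‖q j‖ ^ 2) (fun j _ => by positivity)
        (Finset.mem_univ i)
    set k : Fin s → ℤ := fun i => round (q i / δ) with hk
    have hkabs : ∀ i, |(k i : ℝ)| ≤ R / δ + 1 / 2 := by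
      intro i
      have h1 : |q i / δ - (k i : ℝ)| ≤ 1 / 2 := abs_sub_round (q i / δ)
      have h2 : |(k i : ℝ)| - |q i / δ| ≤ |(k i : ℝ) - q i / δ| := abs_sub_abs_le_abs_sub _ _
      rw [abs_sub_comm] at h2
      have h3 : |q i / δ| ≤ R / δ := by
        rw [abs_div, abs_of_pos hδ]
        gcongr
        exact hcoord i
      linarith
    have hkmem : ∀ i, k i ∈ Finset.Icc (-(M + 1)) (M + 1) := by
      intro i
      rw [Finset.mem_Icc, ← abs_le]
      have : |(k i : ℝ)| ≤ ((M + 1 : ℤ) : ℝ) := by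
        push_cast
        have := hkabs i
        linarith
      rw [← Int.cast_abs] at this
      exact_mod_cast this
    set c : EuclideanSpace ℝ (Fin s) := WithLp.toLp 2 (fun i => ((k i : ℝ) * δ)) with hc
    have hct : c ∈ t := by
      rw [ht]
      exact Finset.mem_image.2 ⟨k, Fintype.mem_piFinset.2 hkmem, rfl⟩
    refine Set.mem_biUnion hct ?_
    rw [Metric.mem_ball]
    have hcd : ∀ i, dist (q i) (c i) ≤ δ / 2 := by
      intro i
      rw [Real.dist_eq]
      have h1 : q i - c i = (q i / δ - (k i : ℝ)) * δ := by
        rw [hc]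
        field_simp
      rw [h1, abs_mul, abs_of_pos hδ]
      have := abs_sub_round (q i / δ)
      calc |q i / δ - ((k i : ℝ))| * δ ≤ (1 / 2) * δ := by
            apply mul_le_mul_of_nonneg_right _ hδ.le
            exact abs_sub_round (q i / δ)
        _ = δ / 2 := by ring
    rw [EuclideanSpace.dist_eq]
    rw [Real.sqrt_lt' (by positivity)]
    calc (∑ i, dist (q i) (c i) ^ 2) ≤ ∑ _i : Fin s, (δ / 2) ^ 2 := by
          apply Finset.sum_le_sum
          intro i _
          have := hcd i
          nlinarith [dist_nonneg (x := q i) (y := c i)]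
      _ = s * (δ / 2) ^ 2 := by
          rw [Finset.sum_const, Finset.card_univ, Fintype.card_fin]
          push_cast
          ring
      _ < ((s + 1) * δ) ^ 2 := by nlinarith [Nat.cast_nonneg (α := ℝ) s]

lemma covering_poly_bound {s m : ℕ} (A : Set (EuclideanSpace ℝ (Fin s)))
    (hA : IsBounded A) (φ : EuclideanSpace ℝ (Fin s) → EuclideanSpace ℝ (Fin m)) (K : NNReal)
    (hφ : LipschitzOnWith K φ A) :
    ∃ C : ℝ, 1 ≤ C ∧ ∀ ρ : ℝ, 0 < ρ → ρ ≤ 1 →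
      (coveringNumber (closure (φ '' A)) ρ : ℝ) ≤ (C / ρ) ^ s := by
  classical
  obtain ⟨R₀, hR₀⟩ := (isBounded_iff_subset_closedBall 0).1 hA
  set R : ℝ := max R₀ 1 with hRdef
  have hR : 0 < R := lt_of_lt_of_le one_pos (le_max_right _ _)
  have hAR : A ⊆ {q : EuclideanSpace ℝ (Fin s) | ‖q‖ ≤ R} := by
    intro q hq
    have := hR₀ hq
    rw [Metric.mem_closedBall, dist_zero_right] at this
    exact this.trans (le_max_left _ _)
  set C : ℝ := 2 * R * (2 * (K : ℝ) + 1) * (s + 1) * 2 + 5 with hC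
  have hK1 : (0:ℝ) < 2 * (K : ℝ) + 1 := by positivity
  have hCpos : (0:ℝ) ≤ 2 * R * (2 * (K : ℝ) + 1) * ((s:ℝ) + 1) * 2 := by positivity
  refine ⟨C, by rw [hC]; linarith, ?_⟩
  intro ρ hρ0 hρ1
  set ρ' : ℝ := ρ / (2 * (2 * (K : ℝ) + 1)) with hρ'
  have hρ'0 : 0 < ρ' := by positivity
  set δ : ℝ := ρ' / (s + 1) with hδdef
  have hδ : 0 < δ := by positivity
  obtain ⟨t, htcard, htcover⟩ := grid_cover (s := s) R δ hR hδ
  have hδρ' : (s + 1 : ℝ) * δ = ρ' := by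
    rw [hδdef]
    field_simp
  -- define the selection function
  set g : EuclideanSpace ℝ (Fin s) → EuclideanSpace ℝ (Fin m) := fun c =>
    if h : (Metric.ball c ρ' ∩ A).Nonempty then φ h.choose else φ 0 with hg
  have hcover2 : closure (φ '' A) ⊆ ⋃ y ∈ t.image g, Metric.ball y ρ := by
    intro z hz
    obtain ⟨w, hw, hzw⟩ := Metric.mem_closure_iff.1 hz (ρ / 2) (by positivity)
    obtain ⟨q, hqA, rfl⟩ := hw
    obtain ⟨c, hct, hqc⟩ := Set.mem_iUnion₂.1 (htcover (hAR hqA))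
    rw [Metric.mem_ball] at hqc
    rw [hδρ'] at hqc
    have hne : (Metric.ball c ρ' ∩ A).Nonempty := ⟨q, Metric.mem_ball.2 hqc, hqA⟩
    have hgc : g c = φ hne.choose := by rw [hg]; exact dif_pos hne
    obtain ⟨hpball, hpA⟩ := hne.choose_spec
    rw [Metric.mem_ball] at hpball
    refine Set.mem_biUnion (Finset.mem_image_of_mem g hct) ?_
    rw [Metric.mem_ball]
    have hqp : dist q hne.choose ≤ 2 * ρ' := by
      calc dist q hne.choose ≤ dist q c + dist c hne.choose := dist_triangle _ _ _
        _ ≤ ρ' + ρ' := by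
            rw [dist_comm c]
            exact add_le_add hqc.le hpball.le
        _ = 2 * ρ' := by ring
    have hφqp : dist (φ q) (g c) ≤ ρ / 2 := by
      rw [hgc]
      calc dist (φ q) (φ hne.choose) ≤ (K : ℝ) * dist q hne.choose :=
            hφ.dist_le_mul q hqA hne.choose hpA
        _ ≤ (K : ℝ) * (2 * ρ') := mul_le_mul_of_nonneg_left hqp K.coe_nonneg
        _ ≤ ρ / 2 := by
            rw [hρ']
            rw [show (K:ℝ) * (2 * (ρ / (2 * (2 * (K:ℝ) + 1)))) =
              2 * (K:ℝ) * ρ / (2 * (2 * (K:ℝ) + 1)) from by ring]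
            rw [div_le_div_iff₀ (by positivity) (by norm_num : (0:ℝ) < 2)]
            nlinarith [K.coe_nonneg, hρ0]
    calc dist z (g c) ≤ dist z (φ q) + dist (φ q) (g c) := dist_triangle _ _ _
      _ < ρ / 2 + ρ / 2 := by
          apply add_lt_add_of_lt_of_le hzw hφqp
      _ = ρ := by ring
  calc (coveringNumber (closure (φ '' A)) ρ : ℝ)
      ≤ ((t.image g).card : ℝ) := by exact_mod_cast coveringNumber_le_card hcover2
    _ ≤ (t.card : ℝ) := by exact_mod_cast Finset.card_image_le
    _ ≤ (2 * (R / δ) + 5) ^ s := htcard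
    _ ≤ (C / ρ) ^ s := by
        apply pow_le_pow_left₀ (by positivity)
        have hδval : δ = ρ / (2 * (2 * (K : ℝ) + 1) * (s + 1)) := by
          rw [hδdef, hρ']
          field_simp
        rw [hδval, hC, div_div_eq_mul_div, le_div_iff₀ hρ0]
        have hexp : (2 * (R * (2 * (2 * (K:ℝ) + 1) * ((s:ℝ) + 1)) / ρ) + 5) * ρ
            = 2 * R * (2 * (2 * (K:ℝ) + 1) * ((s:ℝ) + 1)) + 5 * ρ := by
          field_simp
        rw [hexp]
        have heq : 2 * R * (2 * (2 * (K:ℝ) + 1) * ((s:ℝ) + 1))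
            = 2 * R * (2 * (K:ℝ) + 1) * ((s:ℝ) + 1) * 2 := by ring
        rw [heq]
        linarith

lemma lipschitzOnWith_isBounded_image {s m : ℕ} {A : Set (EuclideanSpace ℝ (Fin s))}
    {φ : EuclideanSpace ℝ (Fin s) → EuclideanSpace ℝ (Fin m)} {K : NNReal}
    (hφ : LipschitzOnWith K φ A) (hA0 : A.Nonempty) (hA : IsBounded A) :
    IsBounded (φ '' A) := by
  obtain ⟨p₀, hp₀⟩ := hA0
  obtain ⟨r, hr⟩ := (isBounded_iff_subset_closedBall p₀).1 hA
  refine (isBounded_iff_subset_closedBall (φ p₀)).2 ⟨(K : ℝ) * r, ?_⟩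
  rintro _ ⟨q, hq, rfl⟩
  rw [Metric.mem_closedBall]
  calc dist (φ q) (φ p₀) ≤ (K : ℝ) * dist q p₀ := hφ.dist_le_mul q hq p₀ hp₀
    _ ≤ (K : ℝ) * r := mul_le_mul_of_nonneg_left (hr hq) K.coe_nonneg

theorem exists_full_measure_set_of_rectifiableRV {s m : ℕ} {Ω : Type*} [MeasureSpace Ω]
    [IsProbabilityMeasure (volume : Measure Ω)]
    (x : Ω → EuclideanSpace ℝ (Fin m)) (h : IsRectifiableRV s m x) :
    ∃ U : Set (EuclideanSpace ℝ (Fin m)), volume (x ⁻¹' U) = 1 ∧ upperModMinkDim U ≤ s := by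
  obtain ⟨hx, U₀, ⟨hU₀meas, A, φ, hAφ, hnull⟩, hU₀full, hac⟩ := h
  set W : Set (EuclideanSpace ℝ (Fin m)) := ⋃ i, φ i '' A i with hW
  refine ⟨U₀ ∩ W, ?_, ?_⟩
  · have h0 : volume (x ⁻¹' (U₀ \ W)) = 0 := by
      have h1 := Measure.le_map_apply (μ := volume) hx.aemeasurable (U₀ \ W)
      have h2 : Measure.map x volume (U₀ \ W) = 0 := hac hnull
      exact le_antisymm (h2 ▸ h1) zero_le
    refine le_antisymm prob_le_one ?_
    calc (1 : ENNReal) = volume (x ⁻¹' U₀) := hU₀full.symm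
      _ ≤ volume (x ⁻¹' (U₀ ∩ W) ∪ x ⁻¹' (U₀ \ W)) := by
          apply measure_mono
          intro ω hω
          by_cases hωW : x ω ∈ W
          · exact Or.inl ⟨hω, hωW⟩
          · exact Or.inr ⟨hω, hωW⟩
      _ ≤ volume (x ⁻¹' (U₀ ∩ W)) + volume (x ⁻¹' (U₀ \ W)) := measure_union_le _ _
      _ = volume (x ⁻¹' (U₀ ∩ W)) := by rw [h0, add_zero]
  · set V : ℕ → Set (EuclideanSpace ℝ (Fin m)) := fun i => closure (φ i '' A i) with hV
    have hcover : IsDimCover (U₀ ∩ W) V := by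
      constructor
      · intro i
        obtain ⟨hne, hb, _, K, hK⟩ := hAφ i
        exact ⟨(hne.image _).closure, (lipschitzOnWith_isBounded_image hK hne hb).closure,
          isClosed_closure.measurableSet⟩
      · intro y hy
        obtain ⟨i, hi⟩ := Set.mem_iUnion.1 hy.2
        exact Set.mem_iUnion.2 ⟨i, subset_closure hi⟩
    have hdim : ∀ i, upperMinkDim (V i) ≤ (s : ℝ) := by
      intro i
      obtain ⟨hne, hb, _, K, hK⟩ := hAφ i
      obtain ⟨C, hC1, hC⟩ := covering_poly_bound (A i) hb (φ i) K hK
      exact upperMinkDim_le_of_poly _ s C hC1 hC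
    have hsup : (⨆ i, upperMinkDim (V i)) ≤ (s : ℝ) :=
      Real.iSup_le hdim (Nat.cast_nonneg s)
    refine le_trans (csInf_le ?_ ⟨V, hcover, rfl⟩) hsup
    refine ⟨0, ?_⟩
    rintro d ⟨V', _, hd'⟩
    exact hd' ▸ Real.iSup_nonneg fun i => upperMinkDim_nonneg _
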